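/- Define f : ℝ → ℝ by f(v) = S₀(1 − e^{−βv}) − αv and set R₀ := S₀β/α. Then: (a) f(0) = 0 and f′(0) = α(R₀ − 1); (b) f is strictly concave on ℝ; (c) f(v) → −∞ as v → +∞; (d) if R₀ > 1 there exists a unique v* > 0 with f(v*) = 0, and f > 0 on (0, v*) while f < 0 on (v*, ∞); (e) if R₀ ≤ 1 then f < 0 on (0, ∞); (f) for every s > 0 and every k > 1 one has f(ks) < k f(s). -/

import Mathlib

open Real Filter Topology

/-- Basic properties of the nonlinearity
`f(v) = S₀(1 − e^{−βv}) − αv` with `R₀ := S₀β/α`: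
(a) `f(0) = 0` and `f′(0) = α(R₀ − 1)`; (b) `f` is strictly concave on `ℝ`;
(c) `f(v) → −∞` as `v → +∞`; (d) if `R₀ > 1` there is a unique `v* > 0` with
`f(v*) = 0`, `f > 0` on `(0, v*)` and `f < 0` on `(v*, ∞)`;
(e) if `R₀ ≤ 1` then `f < 0` on `(0, ∞)`;
(f) for all `s > 0`, `k > 1`, `f(ks) < k f(s)`. -/
theorem kpp_nonlinearity_properties
    (S₀ α β : ℝ) (hS₀ : 0 < S₀) (hα : 0 < α) (hβ : 0 < β) :
    let f : ℝ → ℝ := fun v => S₀ * (1 - Real.exp (-β * v)) - α * v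
    let R₀ : ℝ := S₀ * β / α
    f 0 = 0 ∧ deriv f 0 = α * (R₀ - 1) ∧
    StrictConcaveOn ℝ Set.univ f ∧
    Tendsto f atTop atBot ∧
    (1 < R₀ → ∃ vs : ℝ, 0 < vs ∧ f vs = 0 ∧
      (∀ w, 0 < w → f w = 0 → w = vs) ∧
      (∀ v ∈ Set.Ioo (0:ℝ) vs, 0 < f v) ∧
      (∀ v ∈ Set.Ioi vs, f v < 0)) ∧
    (R₀ ≤ 1 → ∀ v > (0:ℝ), f v < 0) ∧
    (∀ s > (0:ℝ), ∀ k > (1:ℝ), f (k * s) < k * f s) := by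
  intro f R₀
  have hf0 : f 0 = 0 := by simp [f]
  have hd : ∀ v : ℝ, HasDerivAt f (S₀ * β * Real.exp (-β * v) - α) v := by
    intro v
    have h1 : HasDerivAt (fun v : ℝ => -β * v) (-β) v := by
      simpa using (hasDerivAt_id v).const_mul (-β)
    have h2 : HasDerivAt (fun v : ℝ => Real.exp (-β * v)) (Real.exp (-β * v) * (-β)) v := h1.exp
    have h3 : HasDerivAt (fun v : ℝ => S₀ * (1 - Real.exp (-β * v)))
        (S₀ * (0 - Real.exp (-β * v) * (-β))) v := ((hasDerivAt_const v (1:ℝ)).sub h2).const_mul S₀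
    have h4 : HasDerivAt (fun v : ℝ => α * v) α v := by
      simpa using (hasDerivAt_id v).const_mul α
    have h5 := h3.sub h4
    exact h5.congr_deriv (by ring)
  have hderiv : deriv f = fun v => S₀ * β * Real.exp (-β * v) - α := funext fun v => (hd v).deriv
  have hcont : Continuous f := by
    have : Differentiable ℝ f := fun v => (hd v).differentiableAt
    exact this.continuous
  have sc : StrictConcaveOn ℝ Set.univ f := by
    apply strictConcaveOn_of_deriv2_neg convex_univ hcont.continuousOn
    intro x hx
    have hg : HasDerivAt (fun v : ℝ => S₀ * β * Real.exp (-β * v) - α)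
        (S₀ * β * (Real.exp (-β * x) * (-β))) x := by
      have h1 : HasDerivAt (fun v : ℝ => -β * v) (-β) x := by
        simpa using (hasDerivAt_id x).const_mul (-β)
      exact (h1.exp.const_mul (S₀ * β)).sub_const α
    have h2 : deriv^[2] f x = S₀ * β * (Real.exp (-β * x) * (-β)) := by
      show deriv (deriv f) x = _
      rw [hderiv]
      exact hg.deriv
    rw [h2]
    nlinarith [mul_pos (mul_pos (mul_pos hS₀ hβ) hβ) (Real.exp_pos (-β * x))]
  have hda : deriv f 0 = α * (R₀ - 1) := by
    rw [(hd 0).deriv]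
    simp only [R₀, neg_mul, mul_zero, neg_zero, Real.exp_zero, mul_one]
    field_simp
  have htop : Tendsto f atTop atBot := by
    have hle : ∀ v, f v ≤ S₀ - α * v := by
      intro v
      simp only [f]
      nlinarith [Real.exp_pos (-β * v)]
    refine tendsto_atBot_mono hle ?_
    have h1 : Tendsto (fun v : ℝ => α * v) atTop atTop :=
      Tendsto.const_mul_atTop hα tendsto_id
    have h2 : Tendsto (fun v : ℝ => -(α * v)) atTop atBot := tendsto_neg_atBot_iff.mpr h1
    simpa [sub_eq_add_neg] using tendsto_atBot_add_const_left atTop S₀ h2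
  -- sign lemmas from strict concavity
  have hpos_in : ∀ r : ℝ, 0 < r → f r = 0 → ∀ v ∈ Set.Ioo (0:ℝ) r, 0 < f v := by
    intro r hr hfr v hv
    obtain ⟨hv0, hvr⟩ := hv
    have hb : 0 < v / r := div_pos hv0 hr
    have ha : 0 < 1 - v / r := by
      have : v / r < 1 := (div_lt_one hr).mpr hvr
      linarith
    have h := sc.2 (Set.mem_univ 0) (Set.mem_univ r) (ne_of_lt hr) ha hb (by ring)
    simp only [smul_eq_mul] at h
    have hx : (1 - v / r) * 0 + v / r * r = v := by field_simp; ring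
    rw [hf0, hfr, hx] at h
    simpa using h
  have hneg_out : ∀ r : ℝ, 0 < r → f r = 0 → ∀ v ∈ Set.Ioi r, f v < 0 := by
    intro r hr hfr v hv
    have hv0 : 0 < v := lt_trans hr hv
    have hb : 0 < r / v := div_pos hr hv0
    have ha : 0 < 1 - r / v := by
      have : r / v < 1 := (div_lt_one hv0).mpr hv
      linarith
    have h := sc.2 (Set.mem_univ 0) (Set.mem_univ v) (ne_of_lt hv0) ha hb (by ring)
    simp only [smul_eq_mul] at h
    have hx : (1 - r / v) * 0 + r / v * v = r := by field_simp; ring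
    rw [hf0, hx, hfr] at h
    by_contra h'
    push_neg at h'
    nlinarith [mul_nonneg hb.le h']
  have hdpos : 1 < R₀ → ∃ vs : ℝ, 0 < vs ∧ f vs = 0 ∧
      (∀ w, 0 < w → f w = 0 → w = vs) ∧
      (∀ v ∈ Set.Ioo (0:ℝ) vs, 0 < f v) ∧
      (∀ v ∈ Set.Ioi vs, f v < 0) := by
    intro hR
    have hR' : 1 < S₀ * β / α := hR
    have hc : 0 < S₀ * β - α := by
      rw [lt_div_iff₀ hα] at hR'
      linarith
    have hslope : Tendsto (slope f 0) (𝓝[≠] 0) (𝓝 (S₀ * β * Real.exp (-β * 0) - α)) :=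
      hasDerivAt_iff_tendsto_slope.mp (hd 0)
    have hslope' : Tendsto (slope f 0) (𝓝[>] 0) (𝓝 (S₀ * β - α)) := by
      have : Tendsto (slope f 0) (𝓝[>] 0) (𝓝 (S₀ * β * Real.exp (-β * 0) - α)) :=
        hslope.mono_left (nhdsWithin_mono 0 (fun x hx => ne_of_gt hx))
      simpa using this
    have hev : ∀ᶠ x in 𝓝[>] (0:ℝ), 0 < slope f 0 x :=
      hslope'.eventually (eventually_gt_nhds hc)
    have hev2 : ∀ᶠ x in 𝓝[>] (0:ℝ), 0 < x := eventually_mem_nhdsWithin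
    obtain ⟨x₀, hx0slope, hx0pos⟩ := (hev.and hev2).exists
    have hx0f : 0 < f x₀ := by
      have hs : slope f 0 x₀ = f x₀ / x₀ := by
        rw [slope_def_field, hf0]
        simp
      rw [hs] at hx0slope
      have := mul_pos hx0slope hx0pos
      rwa [div_mul_cancel₀ _ (ne_of_gt hx0pos)] at this
    obtain ⟨M, hMneg, hMgt⟩ :=
      ((htop.eventually (eventually_lt_atBot 0)).and (eventually_gt_atTop x₀)).exists
    obtain ⟨vs, hvsmem, hvs0⟩ := intermediate_value_Icc' hMgt.le hcont.continuousOn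
      (Set.mem_Icc.mpr ⟨hMneg.le, hx0f.le⟩)
    have hvspos : 0 < vs := lt_of_lt_of_le hx0pos hvsmem.1
    refine ⟨vs, hvspos, hvs0, ?_, hpos_in vs hvspos hvs0, hneg_out vs hvspos hvs0⟩
    intro w hw hfw
    rcases lt_trichotomy w vs with h | h | h
    · exact absurd hfw (ne_of_gt (hpos_in vs hvspos hvs0 w ⟨hw, h⟩))
    · exact h
    · exact absurd hfw (ne_of_lt (hneg_out vs hvspos hvs0 w h))
  have he : R₀ ≤ 1 → ∀ v > (0:ℝ), f v < 0 := by
    intro hR v hv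
    have hR' : S₀ * β / α ≤ 1 := hR
    have h2 : S₀ * β ≤ α := by rwa [div_le_one hα] at hR'
    have h1 : 1 - Real.exp (-β * v) < β * v := by
      have := Real.add_one_lt_exp (x := -β * v) (by nlinarith)
      linarith
    simp only [f]
    nlinarith [mul_lt_mul_of_pos_left h1 hS₀, mul_le_mul_of_nonneg_right h2 hv.le]
  have hff : ∀ s > (0:ℝ), ∀ k > (1:ℝ), f (k * s) < k * f s := by
    intro s hs k hk
    have hk0 : 0 < k := by linarith
    have hne : k * s ≠ 0 := (mul_pos hk0 hs).ne'
    have ha : 0 < 1 / k := by positivity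
    have hb : 0 < 1 - 1 / k := by
      have : 1 / k < 1 := by rw [div_lt_one hk0]; exact hk
      linarith
    have h := sc.2 (Set.mem_univ (k * s)) (Set.mem_univ 0) hne ha hb (by ring)
    simp only [smul_eq_mul] at h
    have hx : 1 / k * (k * s) + (1 - 1 / k) * 0 = s := by field_simp; ring
    rw [hf0, hx] at h
    have := mul_lt_mul_of_pos_left h hk0
    calc f (k * s) = k * (1 / k * f (k * s) + (1 - 1 / k) * 0) := by field_simp; ring
    _ < k * f s := this
  exact ⟨hf0, hda, sc, htop, hdpos, he, hff⟩
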